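/- (Classical Noether theorem) Let L be a C² Lagrangian and q a C² solution of the Euler-Lagrange equation d/dt ∂₃L = ∂₂L. If the identity ∂₁L·τ + ∂₂L·ξ + ∂₃L·(ξ̇ - q̇τ̇) + L·τ̇ = 0 holds along q (where τ(t,q), ξ(t,q) are C¹ and ξ̇, τ̇ denote total derivatives along t ↦ (t,q(t))), then the quantity C(t) = ∂₃L(t,q,q̇)·ξ(t,q) + (L(t,q,q̇) - ∂₃L(t,q,q̇)·q̇)·τ(t,q) is constant on [a,b]. -/

import Mathlib

open scoped InnerProductSpace

/-- classical Noether theorem: if the invariance identity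
`∂₁L·τ + ∂₂L·ξ + ∂₃L·(ξ̇ - q̇τ̇) + L·τ̇ = 0` holds along an Euler-Lagrange extremal `q`,
then `C(t) = ∂₃L·ξ + (L - ∂₃L·q̇)·τ` is constant on `[a,b]`. -/
theorem noether_classical (n : ℕ) (a b : ℝ) (hab : a < b)
    (L L₁ : ℝ → EuclideanSpace ℝ (Fin n) → EuclideanSpace ℝ (Fin n) → ℝ)
    (L₂ L₃ : ℝ → EuclideanSpace ℝ (Fin n) → EuclideanSpace ℝ (Fin n) →
      EuclideanSpace ℝ (Fin n))
    (hL1 : ∀ t x v, HasDerivAt (fun s => L s x v) (L₁ t x v) t)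
    (hL2 : ∀ t x v, HasGradientAt (fun y => L t y v) (L₂ t x v) x)
    (hL3 : ∀ t x v, HasGradientAt (fun w => L t x w) (L₃ t x v) v)
    (q q' q'' : ℝ → EuclideanSpace ℝ (Fin n))
    (hq : ∀ t, HasDerivAt q (q' t) t) (hq' : ∀ t, HasDerivAt q' (q'' t) t)
    -- chain rule for L along the curve (consequence of L being C²)
    (hchain : ∀ t, HasDerivAt (fun t => L t (q t) (q' t))
      (L₁ t (q t) (q' t) + ⟪L₂ t (q t) (q' t), q' t⟫_ℝ
        + ⟪L₃ t (q t) (q' t), q'' t⟫_ℝ) t)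
    -- Euler-Lagrange equation
    (hEL : ∀ t, HasDerivAt (fun t => L₃ t (q t) (q' t)) (L₂ t (q t) (q' t)) t)
    -- symmetry generators and their total time derivatives along q
    (τ : ℝ → EuclideanSpace ℝ (Fin n) → ℝ)
    (ξ : ℝ → EuclideanSpace ℝ (Fin n) → EuclideanSpace ℝ (Fin n))
    (τd : ℝ → ℝ) (ξd : ℝ → EuclideanSpace ℝ (Fin n))
    (hτd : ∀ t, HasDerivAt (fun t => τ t (q t)) (τd t) t)
    (hξd : ∀ t, HasDerivAt (fun t => ξ t (q t)) (ξd t) t)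
    -- invariance identity along q
    (hinv : ∀ t ∈ Set.Icc a b,
      L₁ t (q t) (q' t) * τ t (q t)
        + ⟪L₂ t (q t) (q' t), ξ t (q t)⟫_ℝ
        + ⟪L₃ t (q t) (q' t), ξd t - τd t • q' t⟫_ℝ
        + L t (q t) (q' t) * τd t = 0) :
    ∀ t₁ ∈ Set.Icc a b, ∀ t₂ ∈ Set.Icc a b,
      ⟪L₃ t₁ (q t₁) (q' t₁), ξ t₁ (q t₁)⟫_ℝ
          + (L t₁ (q t₁) (q' t₁) - ⟪L₃ t₁ (q t₁) (q' t₁), q' t₁⟫_ℝ) * τ t₁ (q t₁)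
        = ⟪L₃ t₂ (q t₂) (q' t₂), ξ t₂ (q t₂)⟫_ℝ
          + (L t₂ (q t₂) (q' t₂) - ⟪L₃ t₂ (q t₂) (q' t₂), q' t₂⟫_ℝ) * τ t₂ (q t₂) := by
  set C : ℝ → ℝ := fun t =>
    ⟪L₃ t (q t) (q' t), ξ t (q t)⟫_ℝ
      + (L t (q t) (q' t) - ⟪L₃ t (q t) (q' t), q' t⟫_ℝ) * τ t (q t) with hC
  have key : ∀ t ∈ Set.Icc a b, HasDerivAt C 0 t := by
    intro t ht
    have h1 := (hEL t).inner ℝ (hξd t)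
    have h2 := (hEL t).inner ℝ (hq' t)
    have h3 := ((hchain t).sub h2).mul (hτd t)
    have h4 := h1.add h3
    refine h4.congr_deriv ?_
    have hi := hinv t ht
    rw [inner_sub_right, real_inner_smul_right] at hi
    simp only [Pi.sub_apply]
    linarith [hi]
  have hcont : ContinuousOn C (Set.Icc a b) := by
    intro t ht
    exact (key t ht).continuousAt.continuousWithinAt
  have hconst := constant_of_has_deriv_right_zero hcont
    (fun x hx => ((key x (Set.Ico_subset_Icc_self hx)).hasDerivWithinAt))
  intro t₁ h₁ t₂ h₂
  have e1 := hconst t₁ h₁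
  have e2 := hconst t₂ h₂
  simpa [hC] using e1.trans e2.symm
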